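/- Pappus' theorem. Let d₁ and d₂ be distinct affine lines in the Euclidean plane. Let A, C, E be pairwise distinct points on d₁ none of which lies on d₂, and let B, D, F be pairwise distinct points on d₂ none of which lies on d₁. Suppose U lies on both line AB and line DE with line AB ≠ line DE, V lies on both line BC and line EF with line BC ≠ line EF, and W lies on both line CD and line FA with line CD ≠ line FA. Then U, V, W are collinear. -/

import Mathlib

noncomputable section

/-- Two vectors whose coordinates (w.r.t. two spanning vectors) have vanishing
cross-product are proportional. -/
lemma pappus_aux_pair {Vs : Type*} [AddCommGroup Vs] [Module ℝ Vs] {v1 v2 x y : Vs}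
    {a b c d : ℝ} (hx : x = a • v1 + b • v2) (hy : y = c • v1 + d • v2)
    (h : a * d = b * c) :
    ∃ t : ℝ, x = t • y ∨ y = t • x := by
  by_cases ha : a = 0
  · by_cases hb : b = 0
    · exact ⟨0, Or.inl (by simp [hx, ha, hb])⟩
    · have hc : c = 0 := by
        have h0 : b * c = 0 := by rw [← h, ha]; ring
        rcases mul_eq_zero.mp h0 with h' | h'
        · exact absurd h' hb
        · exact h'
      refine ⟨d / b, Or.inr ?_⟩
      rw [hx, hy, ha, hc]
      match_scalars <;> field_simp <;> ring
  · refine ⟨c / a, Or.inr ?_⟩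
    rw [hx, hy]
    match_scalars
    · field_simp
    · field_simp
      linear_combination h

/-- A line (affine span of two points) is a collinear set. -/
lemma pappus_aux_collinear_line {P : Type*} [AddCommGroup P] [Module ℝ P] (X Y : P) :
    Collinear ℝ ((affineSpan ℝ {X, Y} : AffineSubspace ℝ P) : Set P) := by
  have h : Collinear ℝ ({X, Y} : Set P) := collinear_pair ℝ X Y
  rw [collinear_iff_rank_le_one] at h ⊢
  rwa [← AffineSubspace.direction_eq_vectorSpan, direction_affineSpan] 

/-- If a line contains two distinct points, it is their affine span. -/
lemma pappus_aux_line_eq {P : Type*} [AddCommGroup P] [Module ℝ P]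
    {d : AffineSubspace ℝ P} (hd : ∃ X Y : P, X ≠ Y ∧ d = affineSpan ℝ {X, Y})
    {R S : P} (hR : R ∈ d) (hS : S ∈ d) (hRS : R ≠ S) :
    d = affineSpan ℝ {R, S} := by
  obtain ⟨X, Y, -, rfl⟩ := hd
  have hc := pappus_aux_collinear_line X Y
  have := hc.affineSpan_eq_of_ne hR hS hRS
  rw [AffineSubspace.affineSpan_coe] at this
  exact this.symm

/-- Pappus' theorem: if the vertices of a hexagon lie alternately on two lines,
then the intersections of the opposite sides are collinear. -/
theorem pappus
    (d₁ d₂ : AffineSubspace ℝ (EuclideanSpace ℝ (Fin 2)))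
    (hd₁ : ∃ X Y : EuclideanSpace ℝ (Fin 2), X ≠ Y ∧ d₁ = affineSpan ℝ {X, Y})
    (hd₂ : ∃ X Y : EuclideanSpace ℝ (Fin 2), X ≠ Y ∧ d₂ = affineSpan ℝ {X, Y})
    (hd : d₁ ≠ d₂)
    (A C E B D F U V W : EuclideanSpace ℝ (Fin 2))
    (hA : A ∈ d₁) (hC : C ∈ d₁) (hE : E ∈ d₁)
    (hAC : A ≠ C) (hCE : C ≠ E) (hAE : A ≠ E)
    (hA₂ : A ∉ d₂) (hC₂ : C ∉ d₂) (hE₂ : E ∉ d₂)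
    (hB : B ∈ d₂) (hD : D ∈ d₂) (hF : F ∈ d₂)
    (hBD : B ≠ D) (hDF : D ≠ F) (hBF : B ≠ F)
    (hB₁ : B ∉ d₁) (hD₁ : D ∉ d₁) (hF₁ : F ∉ d₁)
    (hU₁ : U ∈ affineSpan ℝ {A, B}) (hU₂ : U ∈ affineSpan ℝ {D, E})
    (hUne : affineSpan ℝ {A, B} ≠ affineSpan ℝ {D, E})
    (hV₁ : V ∈ affineSpan ℝ {B, C}) (hV₂ : V ∈ affineSpan ℝ {E, F})
    (hVne : affineSpan ℝ {B, C} ≠ affineSpan ℝ {E, F})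
    (hW₁ : W ∈ affineSpan ℝ {C, D}) (hW₂ : W ∈ affineSpan ℝ {F, A})
    (hWne : affineSpan ℝ {C, D} ≠ affineSpan ℝ {F, A}) :
    Collinear ℝ {U, V, W} := by
  -- identify the two lines with spans of the given points
  have hd1AC : d₁ = affineSpan ℝ {A, C} := pappus_aux_line_eq hd₁ hA hC hAC
  have hd2BD : d₂ = affineSpan ℝ {B, D} := pappus_aux_line_eq hd₂ hB hD hBD
  -- basic nondegeneracy
  have hv1ne : C - A ≠ 0 := sub_ne_zero.mpr (Ne.symm hAC)
  -- linear independence of the frame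
  have hli : LinearIndependent ℝ ![C - A, B - A] := by
    rw [LinearIndependent.pair_iff' hv1ne]
    intro a hax
    apply hB₁
    rw [hd1AC]
    have hBa : B = a • (C -ᵥ A) +ᵥ A := by
      simp only [vsub_eq_sub, vadd_eq_add]
      rw [hax]; abel
    rw [hBa]
    exact smul_vsub_vadd_mem_affineSpan_pair a A C
  -- the frame is a basis
  have hcard : Fintype.card (Fin 2) = Module.finrank ℝ (EuclideanSpace ℝ (Fin 2)) := by
    simp [finrank_euclideanSpace_fin]
  set bb := basisOfLinearIndependentOfCardEqFinrank hli hcard with hbbdef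
  have hbb : ⇑bb = ![C - A, B - A] :=
    coe_basisOfLinearIndependentOfCardEqFinrank hli hcard
  set p : ℝ := bb.repr (D - A) 0 with hpdef
  set q : ℝ := bb.repr (D - A) 1 with hqdef
  have hD2 : p • (C - A) + q • (B - A) = D - A := by
    have h0 := bb.sum_repr (D - A)
    rw [Fin.sum_univ_two, hbb] at h0
    simp only [Matrix.cons_val_zero, Matrix.cons_val_one, Matrix.head_cons] at h0
    exact h0
  -- extract parameters from the incidence hypotheses
  obtain ⟨e, he⟩ : ∃ r : ℝ, r • (C -ᵥ A) = E -ᵥ A := by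
    rw [← vadd_left_mem_affineSpan_pair, vsub_vadd, ← hd1AC]; exact hE
  obtain ⟨f, hf⟩ : ∃ r : ℝ, r • (D -ᵥ B) = F -ᵥ B := by
    rw [← vadd_left_mem_affineSpan_pair, vsub_vadd, ← hd2BD]; exact hF
  obtain ⟨au, hu⟩ : ∃ r : ℝ, r • (B -ᵥ A) = U -ᵥ A := by
    rw [← vadd_left_mem_affineSpan_pair, vsub_vadd]; exact hU₁
  obtain ⟨bu, hu2⟩ : ∃ r : ℝ, r • (E -ᵥ D) = U -ᵥ D := by
    rw [← vadd_left_mem_affineSpan_pair, vsub_vadd]; exact hU₂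
  obtain ⟨av, hv⟩ : ∃ r : ℝ, r • (C -ᵥ B) = V -ᵥ B := by
    rw [← vadd_left_mem_affineSpan_pair, vsub_vadd]; exact hV₁
  obtain ⟨bv, hv2⟩ : ∃ r : ℝ, r • (F -ᵥ E) = V -ᵥ E := by
    rw [← vadd_left_mem_affineSpan_pair, vsub_vadd]; exact hV₂
  obtain ⟨aw, hw⟩ : ∃ r : ℝ, r • (D -ᵥ C) = W -ᵥ C := by
    rw [← vadd_left_mem_affineSpan_pair, vsub_vadd]; exact hW₁
  obtain ⟨bw, hw2⟩ : ∃ r : ℝ, r • (A -ᵥ F) = W -ᵥ F := by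
    rw [← vadd_left_mem_affineSpan_pair, vsub_vadd]; exact hW₂
  simp only [vsub_eq_sub] at he hf hu hu2 hv hv2 hw hw2
  -- coordinate representations
  have hFa : F - A = (f*p) • (C - A) + (1 + f*(q-1)) • (B - A) := by
    linear_combination (norm := module) -hf - f • hD2
  have hUa : U - A = (0:ℝ) • (C - A) + au • (B - A) := by
    linear_combination (norm := module) -hu
  have hUb : U - A = (p + bu*(e-p)) • (C - A) + (q - bu*q) • (B - A) := by
    linear_combination (norm := module) -hu2 - bu • he + bu • hD2 - hD2
  have hVa : V - A = av • (C - A) + (1 - av) • (B - A) := by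
    linear_combination (norm := module) -hv
  have hVb : V - A = (e + bv*(f*p - e)) • (C - A) + (bv*(1 + f*(q-1))) • (B - A) := by
    linear_combination (norm := module) -hv2 + (bv - 1) • he + bv • hFa
  have hWa : W - A = (1 + aw*(p-1)) • (C - A) + (aw*q) • (B - A) := by
    linear_combination (norm := module) -hw - aw • hD2
  have hWb : W - A = ((1-bw)*(f*p)) • (C - A) + ((1-bw)*(1 + f*(q-1))) • (B - A) := by
    linear_combination (norm := module) -hw2 + (1 - bw) • hFa
  -- coordinates are unique
  have key : ∀ {a b c d : ℝ}, a • (C - A) + b • (B - A) = c • (C - A) + d • (B - A) →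
      a = c ∧ b = d := by
    intro a b c d h
    have h2 := LinearIndependent.pair_iff.mp hli (a - c) (b - d)
      (by linear_combination (norm := module) h)
    exact ⟨by linarith [h2.1], by linarith [h2.2]⟩
  obtain ⟨hq1, hq2⟩ := key (hUa.symm.trans hUb)
  obtain ⟨hq3, hq4⟩ := key (hVa.symm.trans hVb)
  obtain ⟨hq5, hq6⟩ := key (hWa.symm.trans hWb)
  -- scalar nondegeneracy conditions
  have he0 : e ≠ 0 := by
    intro h0
    apply hAE
    have : (0:ℝ) • (C - A) = E - A := h0 ▸ he
    simp only [zero_smul] at this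
    exact (sub_eq_zero.mp this.symm).symm
  have he1 : e ≠ 1 := by
    intro h1
    apply hCE
    have : (1:ℝ) • (C - A) = E - A := h1 ▸ he
    simp only [one_smul] at this
    exact sub_left_inj.mp this
  have hq0 : q ≠ 0 := by
    intro h0
    apply hD₁
    rw [hd1AC]
    have hDa : D = p • (C -ᵥ A) +ᵥ A := by
      simp only [vsub_eq_sub, vadd_eq_add]
      have := hD2
      rw [h0] at this
      simp only [zero_smul, add_zero] at this
      rw [this]; abel
    rw [hDa]
    exact smul_vsub_vadd_mem_affineSpan_pair p A C
  have hep : e - p ≠ 0 := by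
    intro h0
    apply he0
    have hp0 : p = 0 := by linear_combination -hq1 - bu*h0
    linear_combination h0 + hp0
  have hDv : f*p + f*q - f + 1 - e ≠ 0 := by
    intro h0
    apply he1
    linear_combination -hq3 - hq4 - bv*h0
  -- the third nondegeneracy, using that lines CD and FA are distinct
  have hΔ : q*(f*p) - (p-1)*(1 + f*(q-1)) ≠ 0 := by
    intro h0
    apply hWne
    have hk0 : 1 + f*(q-1) ≠ 0 := by
      intro hk
      have hfp : f*p = 0 := by
        have h1 : q*(f*p) = 0 := by linear_combination h0 + (p-1)*hk
        exact (mul_eq_zero.mp h1).resolve_left hq0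
      apply hA₂
      have hFA : F = A := by
        have h2 : F - A = 0 := by
          rw [hFa, hfp, hk]; simp
        exact sub_eq_zero.mp h2
      rw [← hFA]; exact hF
    have hDC : D - C = (p-1) • (C - A) + q • (B - A) := by
      linear_combination (norm := module) -hD2
    have hkk : q • (F - A) = (1 + f*(q-1)) • (D - C) := by
      rw [hFa, hDC]
      linear_combination (norm := module) h0 • (C - A)
    have hFk : F - A = (q⁻¹ * (1 + f*(q-1))) • (D - C) := by
      rw [← inv_smul_smul₀ hq0 (F - A), hkk, smul_smul]
    have hk0' : q⁻¹ * (1 + f*(q-1)) ≠ 0 := mul_ne_zero (inv_ne_zero hq0) hk0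
    apply AffineSubspace.ext_of_direction_eq
    · rw [direction_affineSpan, direction_affineSpan, vectorSpan_pair, vectorSpan_pair]
      simp only [vsub_eq_sub]
      apply le_antisymm
      · rw [Submodule.span_singleton_le_iff_mem, Submodule.mem_span_singleton]
        refine ⟨-(q⁻¹ * (1 + f*(q-1)))⁻¹, ?_⟩
        rw [hFk, smul_smul, neg_mul, inv_mul_cancel₀ hk0']
        module
      · rw [Submodule.span_singleton_le_iff_mem, Submodule.mem_span_singleton]
        refine ⟨-(q⁻¹ * (1 + f*(q-1))), ?_⟩
        rw [hFk]
        module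
    · exact ⟨W, hW₁, hW₂⟩
  -- solve for the parameters
  have hau : au = q*e/(e-p) := by
    rw [eq_div_iff hep]
    linear_combination (e-p)*hq2 + q*hq1
  have h1e : bv*(f*p + f*q - f + 1 - e) = 1 - e := by
    linear_combination -hq3 - hq4
  have hav : av = (e*(f*p + f*q - f + 1 - e) + (1-e)*(f*p - e))/(f*p + f*q - f + 1 - e) := by
    rw [eq_div_iff hDv]
    linear_combination (f*p + f*q - f + 1 - e)*hq3 + (f*p - e)*h1e
  have haw : aw = (1 + f*(q-1))/(q*(f*p) - (p-1)*(1 + f*(q-1))) := by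
    rw [eq_div_iff hΔ]
    linear_combination -(1 + f*(q-1))*hq5 + (f*p)*hq6
  -- the cross-product of the coordinates of V - U and W - U vanishes
  have hG : av*(aw*q - au) = (1 - av - au)*(1 + aw*(p-1)) := by
    rw [hau, hav, haw]
    obtain ⟨X, hX⟩ : ∃ X, X = e - p := ⟨_, rfl⟩
    obtain ⟨Y, hY⟩ : ∃ Y, Y = f*p + f*q - f + 1 - e := ⟨_, rfl⟩
    obtain ⟨Z, hZ⟩ : ∃ Z, Z = q*(f*p) - (p-1)*(1 + f*(q-1)) := ⟨_, rfl⟩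
    rw [← hX] at hep ⊢
    rw [← hY] at hDv ⊢
    rw [← hZ] at hΔ ⊢
    field_simp
    rw [hX, hY, hZ]
    ring
  -- conclude collinearity
  have hVU : V - U = av • (C - A) + (1 - av - au) • (B - A) := by
    linear_combination (norm := module) hVa - hUa
  have hWU : W - U = (1 + aw*(p-1)) • (C - A) + (aw*q - au) • (B - A) := by
    linear_combination (norm := module) hWa - hUa
  obtain ⟨t, ht⟩ := pappus_aux_pair hVU hWU (by linear_combination hG)
  rw [collinear_iff_of_mem (Set.mem_insert U {V, W})]
  rcases ht with h | h
  · refine ⟨W - U, fun P hP => ?_⟩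
    simp only [Set.mem_insert_iff, Set.mem_singleton_iff] at hP
    rcases hP with rfl | rfl | rfl
    · exact ⟨0, by simp [vadd_eq_add]⟩
    · exact ⟨t, by rw [vadd_eq_add, ← h]; abel⟩
    · exact ⟨1, by rw [vadd_eq_add, one_smul]; abel⟩
  · refine ⟨V - U, fun P hP => ?_⟩
    simp only [Set.mem_insert_iff, Set.mem_singleton_iff] at hP
    rcases hP with rfl | rfl | rfl
    · exact ⟨0, by simp [vadd_eq_add]⟩
    · exact ⟨1, by rw [vadd_eq_add, one_smul]; abel⟩
    · exact ⟨t, by rw [vadd_eq_add, ← h]; abel⟩
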